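/- Let S be a commutative ring, A an n × m matrix over S, and b ∈ S^n. If for every prime ideal p of S the matrix A has the same rank over the residue field κ(p), then the set of primes p such that the linear system A x = b is solvable over κ(p) is Zariski closed in Spec S. -/

import Mathlib

open Matrix Module Submodule

/-- The canonical map from `S` to the residue field of the prime `p`. -/
noncomputable def resMap {S : Type*} [CommRing S] (p : PrimeSpectrum S) :
    S →+* IsLocalRing.ResidueField (Localization.AtPrime p.asIdeal) :=
  (IsLocalRing.residue _).comp (algebraMap S (Localization.AtPrime p.asIdeal))

lemma resMap_eq_zero_iff {S : Type*} [CommRing S] (p : PrimeSpectrum S) (s : S) :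
    resMap p s = 0 ↔ s ∈ p.asIdeal := by
  rw [resMap, RingHom.comp_apply, IsLocalRing.residue_eq_zero_iff]
  exact IsLocalization.AtPrime.to_map_mem_maximal_iff
    (Localization.AtPrime p.asIdeal) p.asIdeal s

/-- The augmented matrix `[M | b]`. -/
def augCol {R : Type*} [CommRing R] {n m : ℕ} (M : Matrix (Fin n) (Fin m) R)
    (b : Fin n → R) : Matrix (Fin n) (Fin (m + 1)) R :=
  Matrix.of fun i => Fin.snoc (M i) (b i)

lemma augCol_map {R R' : Type*} [CommRing R] [CommRing R'] {n m : ℕ}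
    (M : Matrix (Fin n) (Fin m) R) (b : Fin n → R) (φ : R →+* R') :
    (augCol M b).map φ = augCol (M.map φ) (fun i => φ (b i)) := by
  ext i j
  induction j using Fin.lastCases with
  | last => simp [augCol]
  | cast k => simp [augCol]

lemma augCol_transpose {R : Type*} [CommRing R] {n m : ℕ} (M : Matrix (Fin n) (Fin m) R)
    (b : Fin n → R) : (augCol M b)ᵀ = Fin.snoc Mᵀ b := by
  ext j i
  induction j using Fin.lastCases with
  | last =>
    simp [augCol]
    exact congrFun (Fin.snoc_last (α := fun _ => Fin n → R) (p := Mᵀ) b).symm i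
  | cast k =>
    simp [augCol]
    exact congrFun (Fin.snoc_castSucc (α := fun _ => Fin n → R) (p := Mᵀ) (x := b) k).symm i

lemma range_snoc {α : Type*} {m : ℕ} (f : Fin m → α) (a : α) :
    Set.range (Fin.snoc f a : Fin (m + 1) → α) = insert a (Set.range f) := by
  ext x
  constructor
  · rintro ⟨j, rfl⟩
    induction j using Fin.lastCases with
    | last => simp
    | cast k => exact Set.mem_insert_iff.mpr (Or.inr ⟨k, by simp⟩)
  · rintro (rfl | ⟨k, rfl⟩)
    · exact ⟨Fin.last m, by simp⟩
    · exact ⟨Fin.castSucc k, by simp⟩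

section FieldLemmas

variable {K : Type*} [Field K]

/-- From a finite family spanning a space of dimension at least `k`, one can select `k`
linearly independent members. -/
lemma exists_linearIndependent_comp {V : Type*} [AddCommGroup V] [Module K V]
    {m k : ℕ} (v : Fin m → V) (h : k ≤ finrank K (span K (Set.range v))) :
    ∃ g : Fin k → Fin m, LinearIndependent K (v ∘ g) := by
  classical
  obtain ⟨s, hsub, hspan, hind⟩ := exists_linearIndependent K (Set.range v)
  have hfin : s.Finite := (Set.finite_range v).subset hsub
  haveI : Fintype s := hfin.fintype
  have hcard : finrank K (span K s) = s.toFinset.card := finrank_span_set_eq_card hind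
  have hk : k ≤ Fintype.card s := by
    rw [← Set.toFinset_card, ← hcard, hspan]
    exact h
  obtain ⟨ι⟩ : Nonempty (Fin k ↪ s) :=
    Function.Embedding.nonempty_of_card_le (by simpa using hk)
  have hmem : ∀ i : Fin k, ∃ j : Fin m, v j = (ι i : V) := fun i => hsub (ι i).2
  choose g hg using hmem
  refine ⟨g, ?_⟩
  have : v ∘ g = (fun x : s => (x : V)) ∘ ι := funext fun i => hg i
  rw [this]
  exact hind.comp ι ι.injective

/-- Rank at most `r` iff all `(r+1)`-minors vanish, over a field. -/
lemma rank_le_iff_det_submatrix {n m : ℕ} (r : ℕ) (M : Matrix (Fin n) (Fin m) K) :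
    M.rank ≤ r ↔ ∀ (f : Fin (r + 1) → Fin n) (g : Fin (r + 1) → Fin m),
      (M.submatrix f g).det = 0 := by
  classical
  constructor
  · intro h f g
    by_contra hd
    have hu : IsUnit (M.submatrix f g) := (isUnit_iff_isUnit_det _).mpr (Ne.isUnit hd)
    have h1 : M.submatrix f g =
        ((1 : Matrix (Fin n) (Fin n) K).submatrix f id) * M *
          ((1 : Matrix (Fin m) (Fin m) K).submatrix id g) := by
      ext i j
      simp [mul_apply, one_apply, Finset.sum_ite_eq, Finset.sum_ite_eq']
    have hle : (M.submatrix f g).rank ≤ M.rank := by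
      rw [h1]
      exact le_trans (rank_mul_le_left _ _) (rank_mul_le_right _ _)
    rw [rank_of_isUnit _ hu] at hle
    simp only [Fintype.card_fin] at hle
    omega
  · intro h
    by_contra hr
    push_neg at hr
    have h1 : r + 1 ≤ finrank K (span K (Set.range Mᵀ)) := by
      rw [show Set.range Mᵀ = Set.range M.col from rfl, ← rank_eq_finrank_span_cols]; omega
    obtain ⟨g, hg⟩ := exists_linearIndependent_comp Mᵀ h1
    set N : Matrix (Fin n) (Fin (r + 1)) K := M.submatrix id g with hN
    have hNt : Nᵀ = Mᵀ ∘ g := rfl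
    have hNrank : N.rank = r + 1 := by
      rw [rank_eq_finrank_span_cols, show N.col = Mᵀ ∘ g from hNt, finrank_span_eq_card hg, Fintype.card_fin]
    have h2 : r + 1 ≤ finrank K (span K (Set.range (fun i : Fin n => N i))) := by
      have : (fun i : Fin n => N i) = Nᵀᵀ := rfl
      rw [show (fun i : Fin n => N i) = Nᵀ.col from rfl, ← rank_eq_finrank_span_cols,
        rank_transpose, hNrank]
    obtain ⟨f, hf⟩ := exists_linearIndependent_comp (fun i : Fin n => N i) h2
    have hQ : LinearIndependent K (fun i => ((M.submatrix f g)ᵀ)ᵀ i) := hf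
    have hinj : Function.Injective ((M.submatrix f g)ᵀ).mulVec :=
      Matrix.mulVec_injective_iff.mpr hQ
    have hu : IsUnit ((M.submatrix f g)ᵀ) := mulVec_injective_iff_isUnit.mp hinj
    have hdet : (M.submatrix f g).det ≠ 0 := by
      have := ((isUnit_iff_isUnit_det _).mp hu).ne_zero
      rwa [det_transpose] at this
    exact hdet (h f g)

/-- Over a field, if `M` has rank `r`, solvability of `M x = b` is equivalent to the
augmented matrix having rank at most `r`. -/
lemma solvable_iff_rank_aug_le {n m r : ℕ} (M : Matrix (Fin n) (Fin m) K)
    (b : Fin n → K) (hM : M.rank = r) :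
    (∃ x, M.mulVec x = b) ↔ (augCol M b).rank ≤ r := by
  have hrange : Set.range (augCol M b)ᵀ = insert b (Set.range Mᵀ) := by
    rw [augCol_transpose]
    exact range_snoc (α := Fin n → K) Mᵀ b
  constructor
  · rintro ⟨x, hx⟩
    have hb : b ∈ span K (Set.range Mᵀ) := by
      rw [show Set.range Mᵀ = Set.range M.col from rfl, ← Matrix.range_mulVecLin]
      exact ⟨x, hx⟩
    rw [rank_eq_finrank_span_cols,
      show Set.range (augCol M b).col = Set.range (augCol M b)ᵀ from rfl,
      hrange, span_insert_eq_span hb,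
      show Set.range Mᵀ = Set.range M.col from rfl, ← rank_eq_finrank_span_cols, hM]
  · intro h
    have hle : span K (Set.range Mᵀ) ≤ span K (Set.range (augCol M b)ᵀ) := by
      rw [hrange]
      exact span_mono (Set.subset_insert _ _)
    have h1 : r ≤ (augCol M b).rank := by
      rw [← hM, rank_eq_finrank_span_cols, rank_eq_finrank_span_cols]
      exact Submodule.finrank_mono hle
    have heq : span K (Set.range Mᵀ) = span K (Set.range (augCol M b)ᵀ) := by
      apply Submodule.eq_of_le_of_finrank_eq hle
      rw [show Set.range Mᵀ = Set.range M.col from rfl,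
        show Set.range (augCol M b)ᵀ = Set.range (augCol M b).col from rfl,
        ← rank_eq_finrank_span_cols, ← rank_eq_finrank_span_cols, hM]
      omega
    have hb : b ∈ span K (Set.range Mᵀ) := by
      rw [heq, hrange]
      exact subset_span (Set.mem_insert _ _)
    rw [show Set.range Mᵀ = Set.range M.col from rfl, ← Matrix.range_mulVecLin] at hb
    exact hb

end FieldLemmas

/-- If an `n × m` matrix `A` over a commutative ring `S` has the same rank over the residue
field `κ(p)` of every prime `p`, then the locus of primes `p` where the linear system
`A x = b` is solvable over `κ(p)` is Zariski closed in `Spec S`. -/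
theorem stmt0 {S : Type*} [CommRing S] {n m : ℕ}
    (A : Matrix (Fin n) (Fin m) S) (b : Fin n → S)
    (hrank : ∃ r : ℕ, ∀ p : PrimeSpectrum S, (A.map (resMap p)).rank = r) :
    IsClosed {p : PrimeSpectrum S |
      ∃ x : Fin m → IsLocalRing.ResidueField (Localization.AtPrime p.asIdeal),
        (A.map (resMap p)).mulVec x = fun i => resMap p (b i)} := by
  obtain ⟨r, hr⟩ := hrank
  have key : {p : PrimeSpectrum S |
      ∃ x : Fin m → IsLocalRing.ResidueField (Localization.AtPrime p.asIdeal),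
        (A.map (resMap p)).mulVec x = fun i => resMap p (b i)} =
      PrimeSpectrum.zeroLocus
        {d : S | ∃ (f : Fin (r + 1) → Fin n) (g : Fin (r + 1) → Fin (m + 1)),
          d = ((augCol A b).submatrix f g).det} := by
    ext p
    rw [Set.mem_setOf_eq, PrimeSpectrum.mem_zeroLocus,
      solvable_iff_rank_aug_le _ _ (hr p), ← augCol_map, rank_le_iff_det_submatrix]
    constructor
    · intro h d hd
      obtain ⟨f, g, rfl⟩ := hd
      have := h f g
      rw [Matrix.submatrix_map] at this
      rw [show ((((augCol A b).submatrix f g).map ⇑(resMap p))).det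
          = resMap p (((augCol A b).submatrix f g).det) from ((resMap p).map_det _).symm] at this
      exact (resMap_eq_zero_iff p _).mp this
    · intro h f g
      rw [Matrix.submatrix_map,
        show ((((augCol A b).submatrix f g).map ⇑(resMap p))).det
          = resMap p (((augCol A b).submatrix f g).det) from ((resMap p).map_det _).symm]
      exact (resMap_eq_zero_iff p _).mpr (h ⟨f, g, rfl⟩)
  rw [key]
  exact PrimeSpectrum.isClosed_zeroLocus _
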